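/- In the allegory A_P of relations of an elementary existential doctrine P (objects those of C, hom-posets A_P(A,B) = P(A×B), composition by ∃ along the middle projection, identities δ_A), composition is associative and δ_A is a two-sided unit, and the opposite operation θ ↦ P_{⟨p2,p1⟩}(θ) is an involution satisfying (ψ∘θ)° = θ°∘ψ°. -/

import Mathlib

open CategoryTheory CategoryTheory.Limits

universe u v w

/-- Layer 0: an indexed family of inf-semilattices over a category. -/
structure DocL0 (C : Type u) [Category.{v} C] where
  obj : C → Type w
  semi : ∀ A : C, SemilatticeInf (obj A)

attribute [instance] DocL0.semi

/-- Layer 1: fibrewise top elements. -/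
structure DocL1 (C : Type u) [Category.{v} C] extends DocL0.{u, v, w} C where
  otop : ∀ A : C, OrderTop (obj A)

attribute [instance] DocL1.otop

/-- A doctrine: an indexed inf-semilattice `P : Cᵒᵖ → InfSL`. -/
structure Doctrine (C : Type u) [Category.{v} C] extends DocL1.{u, v, w} C where
  map : ∀ {A B : C}, (A ⟶ B) → obj B → obj A
  map_id : ∀ (A : C) (x : obj A), map (𝟙 A) x = x
  map_comp : ∀ {A B D : C} (f : A ⟶ B) (g : B ⟶ D) (x : obj D),
    map (f ≫ g) x = map f (map g x)
  map_mono : ∀ {A B : C} (f : A ⟶ B), Monotone (map f)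
  map_inf : ∀ {A B : C} (f : A ⟶ B) (x y : obj B),
    map f (x ⊓ y) = map f x ⊓ map f y
  map_top : ∀ {A B : C} (f : A ⟶ B), map f (⊤ : obj B) = (⊤ : obj A)

/-- An elementary existential doctrine. -/
structure EED (C : Type u) [Category.{v} C] [HasBinaryProducts C] extends
    Doctrine.{u, v, w} C where
  delta : ∀ A : C, obj (A ⨯ A)
  elem_i : ∀ {A : C} (α : obj A) (β : obj (A ⨯ A)),
    map prod.fst α ⊓ delta A ≤ β ↔ α ≤ map (diag A) β
  elem_ii : ∀ {X A : C} (α : obj (X ⨯ A)) (β : obj ((X ⨯ A) ⨯ A)),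
    map prod.fst α ⊓ map (prod.lift (prod.fst ≫ prod.snd) prod.snd) (delta A) ≤ β ↔
      α ≤ map (prod.lift (𝟙 (X ⨯ A)) prod.snd) β
  ex : ∀ {A B : C}, (A ⟶ B) → obj A → obj B
  ex_adj : ∀ {A B : C} (f : A ⟶ B) (α : obj A) (β : obj B),
    ex f α ≤ β ↔ α ≤ map f β
  frobenius : ∀ {A B : C} (f : A ⟶ B) (α : obj B) (β : obj A),
    ex f (map f α ⊓ β) = α ⊓ ex f β
  beck_chevalley : ∀ {A A' B : C} (f : A' ⟶ A) (β : obj (A ⨯ B)),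
    ex prod.fst (map (prod.map f (𝟙 B)) β) = map f (ex prod.fst β)

namespace EED

variable {C : Type u} [Category.{v} C] [HasBinaryProducts C] (P : EED.{u, v, w} C)

/-- Relational composition `∃_{p₂}(P_{⟨p₁,p₂⟩}(θ) ∧ P_{⟨p₂,p₃⟩}(ζ))`. -/
noncomputable def comp {A B D : C} (θ : P.obj (A ⨯ B)) (ζ : P.obj (B ⨯ D)) : P.obj (A ⨯ D) :=
  P.ex (prod.lift (prod.fst ≫ prod.fst) prod.snd)
    (P.map prod.fst θ ⊓ P.map (prod.lift (prod.fst ≫ prod.snd) prod.snd) ζ)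

/-- Opposite relation `P_{⟨p₂,p₁⟩}(θ)`. -/
noncomputable def op {A B : C} (θ : P.obj (A ⨯ B)) : P.obj (B ⨯ A) :=
  P.map (prod.lift prod.snd prod.fst) θ

/-- `ρ ≤ P_{⟨p₂,p₁⟩}(ρ)`. -/
def SymmRel {A : C} (ρ : P.obj (A ⨯ A)) : Prop :=
  ρ ≤ P.map (prod.lift prod.snd prod.fst) ρ

/-- `P_{⟨p₁,p₂⟩}(ρ) ∧ P_{⟨p₂,p₃⟩}(ρ) ≤ P_{⟨p₁,p₃⟩}(ρ)` in `P((A×A)×A)`. -/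
def TransRel {A : C} (ρ : P.obj (A ⨯ A)) : Prop :=
  P.map prod.fst ρ ⊓ P.map (prod.lift (prod.fst ≫ prod.snd) prod.snd) ρ ≤
    P.map (prod.lift (prod.fst ≫ prod.fst) prod.snd) ρ

/-- `δ_A ≤ ρ`. -/
def ReflRel {A : C} (ρ : P.obj (A ⨯ A)) : Prop := P.delta A ≤ ρ

/-- A `P`-equivalence relation. -/
def EqRel {A : C} (ρ : P.obj (A ⨯ A)) : Prop :=
  P.ReflRel ρ ∧ P.SymmRel ρ ∧ P.TransRel ρ

/-- Conditions (i)–(v) for an arrow `φ : ⟨A,ρ⟩ → ⟨B,σ⟩` of the exact completion `T_P`. -/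
def IsArrow {A B : C} (ρ : P.obj (A ⨯ A)) (σ : P.obj (B ⨯ B)) (φ : P.obj (A ⨯ B)) : Prop :=
  (φ ≤ P.map (prod.lift prod.fst prod.fst) ρ ⊓ P.map (prod.lift prod.snd prod.snd) σ) ∧
  (P.map prod.fst ρ ⊓ P.map (prod.lift (prod.fst ≫ prod.snd) prod.snd) φ ≤
      P.map (prod.lift (prod.fst ≫ prod.fst) prod.snd) φ) ∧
  (P.map prod.fst φ ⊓ P.map (prod.lift (prod.fst ≫ prod.snd) prod.snd) σ ≤
      P.map (prod.lift (prod.fst ≫ prod.fst) prod.snd) φ) ∧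
  (P.map prod.fst φ ⊓ P.map (prod.lift (prod.fst ≫ prod.fst) prod.snd) φ ≤
      P.map (prod.lift (prod.fst ≫ prod.snd) prod.snd) σ) ∧
  (P.map (diag A) ρ ≤ P.ex prod.fst φ)

/-- The graph relation `L[f] = ∃_{p₂}(P_{⟨p₁,p₂⟩}(ρ) ∧ P_{⟨f∘p₂,p₃⟩}(σ))` in `P(A×B)`. -/
noncomputable def Lrel {A B : C} (f : A ⟶ B) (ρ : P.obj (A ⨯ A)) (σ : P.obj (B ⨯ B)) : P.obj (A ⨯ B) :=
  P.ex (prod.lift (prod.fst ≫ prod.fst) prod.snd)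
    (P.map prod.fst ρ ⊓ P.map (prod.lift (prod.fst ≫ prod.snd ≫ f) prod.snd) σ)

end EED
namespace EED

variable {C : Type u} [Category.{v} C] [HasBinaryProducts C] (P : EED.{u, v, w} C)

lemma le_map_ex {A B : C} (f : A ⟶ B) (α : P.obj A) : α ≤ P.map f (P.ex f α) :=
  (P.ex_adj f α _).mp le_rfl

lemma ex_le {A B : C} (f : A ⟶ B) {α : P.obj A} {β : P.obj B} (h : α ≤ P.map f β) :
    P.ex f α ≤ β := (P.ex_adj f α β).mpr h

lemma ex_comp' {A B D : C} (f : A ⟶ B) (g : B ⟶ D) (α : P.obj A) :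
    P.ex (f ≫ g) α = P.ex g (P.ex f α) := by
  apply le_antisymm
  · exact P.ex_le _ (by
      rw [P.map_comp]
      exact (P.le_map_ex f α).trans (P.map_mono f (P.le_map_ex g _)))
  · exact P.ex_le _ ((P.ex_adj f _ _).mpr (by rw [← P.map_comp]; exact P.le_map_ex _ α))

lemma ex_id' {A : C} (α : P.obj A) : P.ex (𝟙 A) α = α := by
  apply le_antisymm
  · exact P.ex_le _ (by rw [P.map_id])
  · have := P.le_map_ex (𝟙 A) α; rwa [P.map_id] at this

lemma ex_eq_map {A B : C} (f : A ⟶ B) (g : B ⟶ A) (h1 : f ≫ g = 𝟙 A) (h2 : g ≫ f = 𝟙 B)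
    (α : P.obj A) : P.ex f α = P.map g α := by
  apply le_antisymm
  · exact P.ex_le _ (by rw [← P.map_comp, h1, P.map_id])
  · have := P.map_mono g (P.le_map_ex f α)
    rwa [← P.map_comp, h2, P.map_id] at this

lemma ex_transport {T S Z : C} (j : T ⟶ S) (j' : S ⟶ T) (h1 : j ≫ j' = 𝟙 T)
    (h2 : j' ≫ j = 𝟙 S) (f : S ⟶ Z) (X : P.obj S) :
    P.ex f X = P.ex (j ≫ f) (P.map j X) := by
  rw [P.ex_comp', P.ex_eq_map j j' h1 h2, ← P.map_comp, h2, P.map_id]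

/-- `∃` along the "diagonal" `⟨𝟙, p₂⟩` computed from `elem_ii`. -/
lemma ex_dup {X A : C} (α : P.obj (X ⨯ A)) :
    P.ex (prod.lift (𝟙 (X ⨯ A)) prod.snd) α =
      P.map prod.fst α ⊓ P.map (prod.lift (prod.fst ≫ prod.snd) prod.snd) (P.delta A) := by
  apply le_antisymm
  · exact P.ex_le _ ((P.elem_ii α _).mp le_rfl)
  · exact (P.elem_ii α _).mpr (P.le_map_ex _ α)

lemma ex_dup_map {X A : C} (β : P.obj ((X ⨯ A) ⨯ A)) :
    P.ex (prod.lift (𝟙 (X ⨯ A)) prod.snd) (P.map (prod.lift (𝟙 (X ⨯ A)) prod.snd) β) =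
      β ⊓ P.map (prod.lift (prod.fst ≫ prod.snd) prod.snd) (P.delta A) := by
  have h := P.frobenius (prod.lift (𝟙 (X ⨯ A)) prod.snd) β (⊤ : P.obj (X ⨯ A))
  rw [inf_top_eq] at h
  rw [h, P.ex_dup, P.map_top, top_inf_eq]

end EED
namespace EED

variable {C : Type u} [Category.{v} C] [HasBinaryProducts C] (P : EED.{u, v, w} C)

lemma comp_delta_right {A B : C} (θ : P.obj (A ⨯ B)) : P.comp θ (P.delta B) = θ := by
  unfold comp
  rw [← P.ex_dup_map, ← P.map_comp, prod.lift_fst, P.map_id, ← P.ex_comp']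
  have h : prod.lift (𝟙 (A ⨯ B)) prod.snd ≫
      prod.lift (prod.fst ≫ prod.fst) prod.snd = 𝟙 (A ⨯ B) := by ext <;> simp [prod.lift_fst, prod.lift_snd, prod.lift_fst_assoc, prod.lift_snd_assoc]
  rw [h, P.ex_id']

lemma comp_delta_left {A B : C} (θ : P.obj (A ⨯ B)) : P.comp (P.delta A) θ = θ := by
  unfold comp
  set ehom : (A ⨯ A) ⨯ B ⟶ (B ⨯ A) ⨯ A :=
    prod.lift (prod.lift prod.snd (prod.fst ≫ prod.fst)) (prod.fst ≫ prod.snd) with hehom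
  set einv : (B ⨯ A) ⨯ A ⟶ (A ⨯ A) ⨯ B :=
    prod.lift (prod.lift (prod.fst ≫ prod.snd) prod.snd) (prod.fst ≫ prod.fst) with heinv
  have he1 : ehom ≫ einv = 𝟙 _ := by rw [hehom, heinv]; ext <;> simp [prod.lift_fst, prod.lift_snd, prod.lift_fst_assoc, prod.lift_snd_assoc]
  have he2 : einv ≫ ehom = 𝟙 _ := by rw [hehom, heinv]; ext <;> simp [prod.lift_fst, prod.lift_snd, prod.lift_fst_assoc, prod.lift_snd_assoc]
  have key : P.map (prod.fst : (A ⨯ A) ⨯ B ⟶ A ⨯ A) (P.delta A) ⊓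
      P.map (prod.lift (prod.fst ≫ prod.snd) prod.snd) θ =
      P.map ehom (P.map (prod.lift (prod.fst ≫ prod.snd) prod.snd) (P.delta A) ⊓
        P.map (prod.lift prod.snd (prod.fst ≫ prod.fst)) θ) := by
    rw [P.map_inf, ← P.map_comp, ← P.map_comp]
    have e1 : ehom ≫ prod.lift (prod.fst ≫ prod.snd) prod.snd =
        (prod.fst : (A ⨯ A) ⨯ B ⟶ A ⨯ A) := by rw [hehom]; ext <;> simp [prod.lift_fst, prod.lift_snd, prod.lift_fst_assoc, prod.lift_snd_assoc]
    have e2 : ehom ≫ prod.lift prod.snd (prod.fst ≫ prod.fst) =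
        (prod.lift (prod.fst ≫ prod.snd) prod.snd : (A ⨯ A) ⨯ B ⟶ A ⨯ B) := by
      rw [hehom]; ext <;> simp [prod.lift_fst, prod.lift_snd, prod.lift_fst_assoc, prod.lift_snd_assoc]
    rw [e1, e2]
  rw [key, inf_comm (P.map _ (P.delta A)), ← P.ex_dup_map, ← P.map_comp,
    ← P.ex_eq_map einv ehom he2 he1, ← P.ex_comp', ← P.ex_comp']
  have h3 : prod.lift (𝟙 (B ⨯ A)) prod.snd ≫ prod.lift prod.snd (prod.fst ≫ prod.fst) =
      prod.lift prod.snd prod.fst := by ext <;> simp [prod.lift_fst, prod.lift_snd, prod.lift_fst_assoc, prod.lift_snd_assoc]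
  have h4 : prod.lift (𝟙 (B ⨯ A)) prod.snd ≫ einv ≫
      prod.lift (prod.fst ≫ prod.fst) prod.snd = prod.lift prod.snd prod.fst := by
    rw [heinv]; ext <;> simp [prod.lift_fst, prod.lift_snd, prod.lift_fst_assoc, prod.lift_snd_assoc]
  rw [h3, h4, P.ex_eq_map (prod.lift prod.snd prod.fst) (prod.lift prod.snd prod.fst)
    (by ext <;> simp [prod.lift_fst, prod.lift_snd, prod.lift_fst_assoc, prod.lift_snd_assoc]) (by ext <;> simp [prod.lift_fst, prod.lift_snd, prod.lift_fst_assoc, prod.lift_snd_assoc]), ← P.map_comp]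
  have h5 : (prod.lift prod.snd prod.fst : A ⨯ B ⟶ B ⨯ A) ≫ prod.lift prod.snd prod.fst =
      𝟙 _ := by ext <;> simp [prod.lift_fst, prod.lift_snd, prod.lift_fst_assoc, prod.lift_snd_assoc]
  rw [h5, P.map_id]

lemma op_op {A B : C} (θ : P.obj (A ⨯ B)) : P.op (P.op θ) = θ := by
  unfold op
  rw [← P.map_comp]
  have h : (prod.lift prod.snd prod.fst : A ⨯ B ⟶ B ⨯ A) ≫ prod.lift prod.snd prod.fst =
      𝟙 _ := by ext <;> simp [prod.lift_fst, prod.lift_snd, prod.lift_fst_assoc, prod.lift_snd_assoc]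
  rw [h, P.map_id]

end EED
namespace EED

variable {C : Type u} [Category.{v} C] [HasBinaryProducts C] (P : EED.{u, v, w} C)

lemma op_comp {A B D : C} (θ : P.obj (A ⨯ B)) (ζ : P.obj (B ⨯ D)) :
    P.op (P.comp θ ζ) = P.comp (P.op ζ) (P.op θ) := by
  unfold op comp
  conv_lhs => rw [← P.ex_eq_map (prod.lift prod.snd prod.fst : A ⨯ D ⟶ D ⨯ A)
    (prod.lift prod.snd prod.fst) (by ext <;> simp [prod.lift_fst, prod.lift_snd, prod.lift_fst_assoc, prod.lift_snd_assoc]) (by ext <;> simp [prod.lift_fst, prod.lift_snd, prod.lift_fst_assoc, prod.lift_snd_assoc]), ← P.ex_comp']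
  conv_rhs => rw [← P.map_comp, ← P.map_comp,
    P.ex_transport (prod.lift (prod.lift prod.snd (prod.fst ≫ prod.snd)) (prod.fst ≫ prod.fst) :
        (A ⨯ B) ⨯ D ⟶ (D ⨯ B) ⨯ A)
      (prod.lift (prod.lift prod.snd (prod.fst ≫ prod.snd)) (prod.fst ≫ prod.fst))
      (by ext <;> simp [prod.lift_fst, prod.lift_snd, prod.lift_fst_assoc, prod.lift_snd_assoc]) (by ext <;> simp [prod.lift_fst, prod.lift_snd, prod.lift_fst_assoc, prod.lift_snd_assoc]),
    P.map_inf, ← P.map_comp, ← P.map_comp]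
  have hA : (prod.lift (prod.lift prod.snd (prod.fst ≫ prod.snd)) (prod.fst ≫ prod.fst) :
      (A ⨯ B) ⨯ D ⟶ (D ⨯ B) ⨯ A) ≫ prod.lift (prod.fst ≫ prod.fst) prod.snd =
      prod.lift (prod.fst ≫ prod.fst) prod.snd ≫ prod.lift prod.snd prod.fst := by
    ext <;> simp [prod.lift_fst, prod.lift_snd, prod.lift_fst_assoc, prod.lift_snd_assoc]
  have hB : (prod.lift (prod.lift prod.snd (prod.fst ≫ prod.snd)) (prod.fst ≫ prod.fst) :
      (A ⨯ B) ⨯ D ⟶ (D ⨯ B) ⨯ A) ≫ (prod.fst ≫ prod.lift prod.snd prod.fst) =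
      prod.lift (prod.fst ≫ prod.snd) prod.snd := by ext <;> simp [prod.lift_fst, prod.lift_snd, prod.lift_fst_assoc, prod.lift_snd_assoc]
  have hC : (prod.lift (prod.lift prod.snd (prod.fst ≫ prod.snd)) (prod.fst ≫ prod.fst) :
      (A ⨯ B) ⨯ D ⟶ (D ⨯ B) ⨯ A) ≫
      (prod.lift (prod.fst ≫ prod.snd) prod.snd ≫ prod.lift prod.snd prod.fst) =
      prod.fst := by ext <;> simp [prod.lift_fst, prod.lift_snd, prod.lift_fst_assoc, prod.lift_snd_assoc]
  rw [hA, hB, hC, inf_comm]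

end EED
namespace EED

variable {C : Type u} [Category.{v} C] [HasBinaryProducts C] (P : EED.{u, v, w} C)

lemma main_step {Z1 M V Z2 N R : C} (r1 : Z1 ⟶ M) (e : Z1 ⟶ M ⨯ V) (e' : M ⨯ V ⟶ Z1)
    (he1 : e ≫ e' = 𝟙 Z1) (he2 : e' ≫ e = 𝟙 (M ⨯ V)) (hr : r1 = e ≫ prod.fst)
    (Φ : P.obj Z1) (g : Z2 ⟶ M) (v : Z2 ⟶ N) (ρ : P.obj N) (r : Z2 ⟶ R) :
    P.ex r (P.map g (P.ex r1 Φ) ⊓ P.map v ρ) =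
      P.ex (prod.fst ≫ r) (P.map (prod.map g (𝟙 V) ≫ e') Φ ⊓ P.map (prod.fst ≫ v) ρ) := by
  conv_lhs => rw [hr, P.ex_comp', P.ex_eq_map e e' he1 he2]
  conv_rhs => rw [P.ex_comp', P.map_comp, P.map_comp prod.fst v,
    inf_comm, P.frobenius, P.beck_chevalley, inf_comm]

end EED
namespace EED

variable {C : Type u} [Category.{v} C] [HasBinaryProducts C] (P : EED.{u, v, w} C)

lemma comp_assoc {A B D E : C} (θ : P.obj (A ⨯ B)) (ζ : P.obj (B ⨯ D)) (ξ : P.obj (D ⨯ E)) :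
    P.comp (P.comp θ ζ) ξ = P.comp θ (P.comp ζ ξ) := by
  unfold comp
  conv_lhs => rw [P.main_step (prod.lift (prod.fst ≫ prod.fst) prod.snd)
      (prod.lift (prod.lift (prod.fst ≫ prod.fst) prod.snd) (prod.fst ≫ prod.snd) :
        (A ⨯ B) ⨯ D ⟶ (A ⨯ D) ⨯ B)
      (prod.lift (prod.lift (prod.fst ≫ prod.fst) prod.snd) (prod.fst ≫ prod.snd))
      (by ext <;> simp [prod.lift_fst, prod.lift_snd, prod.lift_fst_assoc, prod.lift_snd_assoc]) (by ext <;> simp [prod.lift_fst, prod.lift_snd, prod.lift_fst_assoc, prod.lift_snd_assoc]) (by ext <;> simp [prod.lift_fst, prod.lift_snd, prod.lift_fst_assoc, prod.lift_snd_assoc])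
      (P.map prod.fst θ ⊓ P.map (prod.lift (prod.fst ≫ prod.snd) prod.snd) ζ)
      prod.fst (prod.lift (prod.fst ≫ prod.snd) prod.snd) ξ
      (prod.lift (prod.fst ≫ prod.fst) prod.snd),
    P.map_inf, ← P.map_comp, ← P.map_comp,
    P.ex_transport (prod.lift (prod.lift (prod.lift (prod.fst ≫ prod.fst ≫ prod.fst)
        (prod.fst ≫ prod.snd)) prod.snd) (prod.fst ≫ prod.fst ≫ prod.snd) :
        ((A ⨯ B) ⨯ D) ⨯ E ⟶ ((A ⨯ D) ⨯ E) ⨯ B)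
      (prod.lift (prod.lift (prod.lift (prod.fst ≫ prod.fst ≫ prod.fst) prod.snd)
        (prod.fst ≫ prod.fst ≫ prod.snd)) (prod.fst ≫ prod.snd))
      (by ext <;> simp [prod.lift_fst, prod.lift_snd, prod.lift_fst_assoc, prod.lift_snd_assoc]) (by ext <;> simp [prod.lift_fst, prod.lift_snd, prod.lift_fst_assoc, prod.lift_snd_assoc]),
    P.map_inf, P.map_inf, ← P.map_comp, ← P.map_comp, ← P.map_comp]
  conv_rhs => rw [inf_comm,
    P.main_step (prod.lift (prod.fst ≫ prod.fst) prod.snd)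
      (prod.lift (prod.lift (prod.fst ≫ prod.fst) prod.snd) (prod.fst ≫ prod.snd) :
        (B ⨯ D) ⨯ E ⟶ (B ⨯ E) ⨯ D)
      (prod.lift (prod.lift (prod.fst ≫ prod.fst) prod.snd) (prod.fst ≫ prod.snd))
      (by ext <;> simp [prod.lift_fst, prod.lift_snd, prod.lift_fst_assoc, prod.lift_snd_assoc]) (by ext <;> simp [prod.lift_fst, prod.lift_snd, prod.lift_fst_assoc, prod.lift_snd_assoc]) (by ext <;> simp [prod.lift_fst, prod.lift_snd, prod.lift_fst_assoc, prod.lift_snd_assoc])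
      (P.map prod.fst ζ ⊓ P.map (prod.lift (prod.fst ≫ prod.snd) prod.snd) ξ)
      (prod.lift (prod.fst ≫ prod.snd) prod.snd) prod.fst θ
      (prod.lift (prod.fst ≫ prod.fst) prod.snd),
    P.map_inf, ← P.map_comp, ← P.map_comp,
    P.ex_transport (prod.lift (prod.lift (prod.fst ≫ prod.fst) prod.snd) (prod.fst ≫ prod.snd) :
        ((A ⨯ B) ⨯ D) ⨯ E ⟶ ((A ⨯ B) ⨯ E) ⨯ D)
      (prod.lift (prod.lift (prod.fst ≫ prod.fst) prod.snd) (prod.fst ≫ prod.snd))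
      (by ext <;> simp [prod.lift_fst, prod.lift_snd, prod.lift_fst_assoc, prod.lift_snd_assoc]) (by ext <;> simp [prod.lift_fst, prod.lift_snd, prod.lift_fst_assoc, prod.lift_snd_assoc]),
    P.map_inf, P.map_inf, ← P.map_comp, ← P.map_comp, ← P.map_comp]
  simp only [Category.assoc]
  have L1 : (prod.lift (prod.lift (prod.lift (prod.fst ≫ prod.fst ≫ prod.fst)
      (prod.fst ≫ prod.snd)) prod.snd) (prod.fst ≫ prod.fst ≫ prod.snd) :
      ((A ⨯ B) ⨯ D) ⨯ E ⟶ ((A ⨯ D) ⨯ E) ⨯ B) ≫ prod.fst ≫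
      prod.lift (prod.fst ≫ prod.fst) prod.snd =
      prod.lift (prod.fst ≫ prod.fst ≫ prod.fst) prod.snd := by ext <;> simp [prod.lift_fst, prod.lift_snd, prod.lift_fst_assoc, prod.lift_snd_assoc]
  have L2 : (prod.lift (prod.lift (prod.lift (prod.fst ≫ prod.fst ≫ prod.fst)
      (prod.fst ≫ prod.snd)) prod.snd) (prod.fst ≫ prod.fst ≫ prod.snd) :
      ((A ⨯ B) ⨯ D) ⨯ E ⟶ ((A ⨯ D) ⨯ E) ⨯ B) ≫ prod.map prod.fst (𝟙 B) ≫
      prod.lift (prod.lift (prod.fst ≫ prod.fst) prod.snd) (prod.fst ≫ prod.snd) ≫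
      prod.fst = prod.fst ≫ prod.fst := by ext <;> simp [prod.lift_fst, prod.lift_snd, prod.lift_fst_assoc, prod.lift_snd_assoc]
  have L3 : (prod.lift (prod.lift (prod.lift (prod.fst ≫ prod.fst ≫ prod.fst)
      (prod.fst ≫ prod.snd)) prod.snd) (prod.fst ≫ prod.fst ≫ prod.snd) :
      ((A ⨯ B) ⨯ D) ⨯ E ⟶ ((A ⨯ D) ⨯ E) ⨯ B) ≫ prod.map prod.fst (𝟙 B) ≫
      prod.lift (prod.lift (prod.fst ≫ prod.fst) prod.snd) (prod.fst ≫ prod.snd) ≫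
      prod.lift (prod.fst ≫ prod.snd) prod.snd =
      prod.lift (prod.fst ≫ prod.fst ≫ prod.snd) (prod.fst ≫ prod.snd) := by ext <;> simp [prod.lift_fst, prod.lift_snd, prod.lift_fst_assoc, prod.lift_snd_assoc]
  have L4 : (prod.lift (prod.lift (prod.lift (prod.fst ≫ prod.fst ≫ prod.fst)
      (prod.fst ≫ prod.snd)) prod.snd) (prod.fst ≫ prod.fst ≫ prod.snd) :
      ((A ⨯ B) ⨯ D) ⨯ E ⟶ ((A ⨯ D) ⨯ E) ⨯ B) ≫ prod.fst ≫
      prod.lift (prod.fst ≫ prod.snd) prod.snd =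
      prod.lift (prod.fst ≫ prod.snd) prod.snd := by ext <;> simp [prod.lift_fst, prod.lift_snd, prod.lift_fst_assoc, prod.lift_snd_assoc]
  have R1 : (prod.lift (prod.lift (prod.fst ≫ prod.fst) prod.snd) (prod.fst ≫ prod.snd) :
      ((A ⨯ B) ⨯ D) ⨯ E ⟶ ((A ⨯ B) ⨯ E) ⨯ D) ≫ prod.fst ≫
      prod.lift (prod.fst ≫ prod.fst) prod.snd =
      prod.lift (prod.fst ≫ prod.fst ≫ prod.fst) prod.snd := by ext <;> simp [prod.lift_fst, prod.lift_snd, prod.lift_fst_assoc, prod.lift_snd_assoc]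
  have R2 : (prod.lift (prod.lift (prod.fst ≫ prod.fst) prod.snd) (prod.fst ≫ prod.snd) :
      ((A ⨯ B) ⨯ D) ⨯ E ⟶ ((A ⨯ B) ⨯ E) ⨯ D) ≫
      prod.map (prod.lift (prod.fst ≫ prod.snd) prod.snd) (𝟙 D) ≫
      prod.lift (prod.lift (prod.fst ≫ prod.fst) prod.snd) (prod.fst ≫ prod.snd) ≫
      prod.fst = prod.lift (prod.fst ≫ prod.fst ≫ prod.snd) (prod.fst ≫ prod.snd) := by
    ext <;> simp [prod.lift_fst, prod.lift_snd, prod.lift_fst_assoc, prod.lift_snd_assoc]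
  have R3 : (prod.lift (prod.lift (prod.fst ≫ prod.fst) prod.snd) (prod.fst ≫ prod.snd) :
      ((A ⨯ B) ⨯ D) ⨯ E ⟶ ((A ⨯ B) ⨯ E) ⨯ D) ≫
      prod.map (prod.lift (prod.fst ≫ prod.snd) prod.snd) (𝟙 D) ≫
      prod.lift (prod.lift (prod.fst ≫ prod.fst) prod.snd) (prod.fst ≫ prod.snd) ≫
      prod.lift (prod.fst ≫ prod.snd) prod.snd =
      prod.lift (prod.fst ≫ prod.snd) prod.snd := by ext <;> simp [prod.lift_fst, prod.lift_snd, prod.lift_fst_assoc, prod.lift_snd_assoc]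
  have R4 : (prod.lift (prod.lift (prod.fst ≫ prod.fst) prod.snd) (prod.fst ≫ prod.snd) :
      ((A ⨯ B) ⨯ D) ⨯ E ⟶ ((A ⨯ B) ⨯ E) ⨯ D) ≫ prod.fst ≫ prod.fst =
      prod.fst ≫ prod.fst := by ext <;> simp [prod.lift_fst, prod.lift_snd, prod.lift_fst_assoc, prod.lift_snd_assoc]
  rw [L1, L2, L3, L4, R1, R2, R3, R4, inf_assoc,
    inf_comm (P.map (prod.fst ≫ prod.fst) θ)]

end EED

/-- in the allegory `A_P` of relations of `P`, composition is
associative, `δ_A` is a two-sided unit, and `θ ↦ P_{⟨p₂,p₁⟩}(θ)` is an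
involution with `(ψ∘θ)° = θ°∘ψ°`. -/
theorem allegory_laws
    {C : Type u} [Category.{v} C] [HasBinaryProducts C] (P : EED.{u, v, w} C)
    {A B D E : C} (θ : P.obj (A ⨯ B)) (ζ : P.obj (B ⨯ D)) (ξ : P.obj (D ⨯ E)) :
    P.comp (P.comp θ ζ) ξ = P.comp θ (P.comp ζ ξ) ∧
    P.comp (P.delta A) θ = θ ∧
    P.comp θ (P.delta B) = θ ∧
    P.op (P.op θ) = θ ∧
    P.op (P.comp θ ζ) = P.comp (P.op ζ) (P.op θ) := by
  exact ⟨P.comp_assoc θ ζ ξ, P.comp_delta_left θ, P.comp_delta_right θ, P.op_op θ, P.op_comp θ ζ⟩
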